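/- Let {h_l}, {μ_l}, {ρ_l}, {Φ_l} be real sequences and m, Υ ∈ ℝ such that for every l: μ_l ≥ 0, ρ_l > 0, Φ_l ≥ m, and Φ_l + (1/(2ρ_l)) ( (max{μ_l + ρ_l h_l, 0})² − μ_l² ) ≤ Υ. If μ_l/ρ_l → 0 and ρ_l → ∞ as l → ∞, then max{h_l, 0} → 0 as l → ∞. -/

import Mathlib

theorem stmt_15
    (h μ ρ Φ : ℕ → ℝ) (m Υ : ℝ)
    (hμ : ∀ l, 0 ≤ μ l) (hρ : ∀ l, 0 < ρ l) (hΦ : ∀ l, m ≤ Φ l)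
    (hbound : ∀ l, Φ l + (1 / (2 * ρ l)) * ((max (μ l + ρ l * h l) 0) ^ 2 - (μ l) ^ 2) ≤ Υ)
    (hμρ : Filter.Tendsto (fun l => μ l / ρ l) Filter.atTop (nhds 0))
    (hρtop : Filter.Tendsto ρ Filter.atTop Filter.atTop) :
    Filter.Tendsto (fun l => max (h l) 0) Filter.atTop (nhds 0) := by
  set C : ℝ := max (Υ - m) 0 with hCdef
  have hC0 : 0 ≤ C := le_max_right _ _
  -- pointwise bound
  have key : ∀ l, max (h l) 0 ≤ μ l / ρ l + Real.sqrt (2 * C / ρ l) := by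
    intro l
    have hρl := hρ l
    have hquot : 0 ≤ 2 * C / ρ l := by positivity
    set s := Real.sqrt (2 * C / ρ l) with hsdef
    have hs0 : 0 ≤ s := Real.sqrt_nonneg _
    have hs2 : s ^ 2 = 2 * C / ρ l := Real.sq_sqrt hquot
    have hbnd : 0 ≤ μ l / ρ l + s := add_nonneg (div_nonneg (hμ l) hρl.le) hs0
    refine max_le ?_ hbnd
    set M := max (μ l + ρ l * h l) 0 with hMdef
    have hM0 : 0 ≤ M := le_max_right _ _
    have hM1 : μ l + ρ l * h l ≤ M := le_max_left _ _
    have hM2 : M ^ 2 ≤ μ l ^ 2 + 2 * ρ l * C := by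
      have hb := hbound l
      have hm := hΦ l
      have hCge : Υ - m ≤ C := le_max_left _ _
      have h2ρ : 0 < 2 * ρ l := by linarith
      have : (1 / (2 * ρ l)) * (M ^ 2 - μ l ^ 2) ≤ C := by
        calc (1 / (2 * ρ l)) * (M ^ 2 - μ l ^ 2) ≤ Υ - Φ l := by linarith
        _ ≤ Υ - m := by linarith
        _ ≤ C := hCge
      have h' : M ^ 2 - μ l ^ 2 ≤ 2 * ρ l * C := by
        calc M ^ 2 - μ l ^ 2 = (2 * ρ l) * ((1 / (2 * ρ l)) * (M ^ 2 - μ l ^ 2)) := by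
              field_simp
          _ ≤ (2 * ρ l) * C := mul_le_mul_of_nonneg_left this h2ρ.le
          _ = 2 * ρ l * C := by ring
      linarith
    have hρs : ρ l ^ 2 * s ^ 2 = 2 * ρ l * C := by
      rw [hs2]; field_simp
    have hrs0 : 0 ≤ μ l + ρ l * s := add_nonneg (hμ l) (mul_nonneg hρl.le hs0)
    have hMle : M ≤ μ l + ρ l * s := by
      have h2 : M ^ 2 ≤ (μ l + ρ l * s) ^ 2 := by
        nlinarith [hM2, hρs, mul_nonneg (hμ l) (mul_nonneg hρl.le hs0)]
      calc M = Real.sqrt (M ^ 2) := (Real.sqrt_sq hM0).symm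
        _ ≤ Real.sqrt ((μ l + ρ l * s) ^ 2) := Real.sqrt_le_sqrt h2
        _ = μ l + ρ l * s := Real.sqrt_sq hrs0
    have : h l ≤ s := by
      have := hM1.trans hMle
      nlinarith [hρl]
    nlinarith [hμ l, hρl, div_nonneg (hμ l) hρl.le, this]
  -- the bound tends to 0
  have hlim : Filter.Tendsto (fun l => μ l / ρ l + Real.sqrt (2 * C / ρ l))
      Filter.atTop (nhds 0) := by
    have h1 : Filter.Tendsto (fun l => 2 * C / ρ l) Filter.atTop (nhds 0) :=
      Filter.Tendsto.div_atTop tendsto_const_nhds hρtop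
    have h2 : Filter.Tendsto (fun l => Real.sqrt (2 * C / ρ l)) Filter.atTop (nhds 0) := by
      have := (Real.continuous_sqrt.tendsto 0).comp h1
      simpa [Function.comp_def] using this
    simpa using hμρ.add h2
  exact squeeze_zero (fun l => le_max_right _ _) key hlim
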